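/- For all θ ∈ ℓ̄₁(Λ), one has H_ε(θ) − H_ε(θ^ε) ≤ (1/ε) ‖θ − θ^ε‖²_{ℓ1}. -/

import Mathlib

open MeasureTheory Complex Filter Topology

set_option maxHeartbeats 1000000

noncomputable section

/-- Frequencies: `Λ = ℤ^d \ {0}`. -/
abbrev Lam (d : ℕ) := {v : Fin d → ℤ // v ≠ 0}

/-- Negation on `Λ`. -/
def negL {d : ℕ} (l : Lam d) : Lam d := ⟨-l.1, by simpa using l.2⟩

/-- Fourier character `φ_λ(x) = exp(2πi⟨λ,x⟩)`. -/
def phiF {d : ℕ} (l : Lam d) (x : Fin d → ℝ) : ℂ :=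
  Complex.exp (2 * (Real.pi : ℂ) * Complex.I * (∑ i, (l.1 i : ℂ) * (x i : ℂ)))

/-- The real Banach space `ℓ̄₁(Λ)` of complex summable sequences with
`θ_{-λ} = conj (θ_λ)`, as a real submodule of `ℓ¹(Λ; ℂ)`. -/
def SymmL1 (d : ℕ) : Submodule ℝ (lp (fun _ : Lam d => ℂ) 1) where
  carrier := {θ | ∀ l, θ (negL l) = starRingEnd ℂ (θ l)}
  add_mem' := by
    intro a b ha hb l
    simp only [lp.coeFn_add, Pi.add_apply, map_add, ha l, hb l]
  zero_mem' := by
    intro l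
    simp [lp.coeFn_zero]
  smul_mem' := by
    intro r a ha l
    simp only [lp.coeFn_smul, Pi.smul_apply, ha l, Complex.real_smul, map_mul,
      Complex.conj_ofReal]

instance (d : ℕ) : NormedAddCommGroup (SymmL1 d) := inferInstance

instance (d : ℕ) : NormedSpace ℝ (SymmL1 d) := inferInstance

/-- The `λ`-th coefficient of an element of `ℓ̄₁(Λ)`. -/
def coeffL {d : ℕ} (θ : SymmL1 d) (l : Lam d) : ℂ := (θ : lp (fun _ : Lam d => ℂ) 1) l

/-- The unit cube `𝒳 = [0,1]^d`. -/
def cube (d : ℕ) : Set (Fin d → ℝ) := Set.Icc 0 1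

/-- The uniform probability measure on the unit cube. -/
def muU (d : ℕ) : Measure (Fin d → ℝ) := volume.restrict (cube d)

/-- `u_θ(x) = Σ_λ θ_λ φ_λ(x)` (a real number thanks to the symmetry of `θ`). -/
def uFun {d : ℕ} (θ : SymmL1 d) (x : Fin d → ℝ) : ℝ :=
  (∑' l : Lam d, coeffL θ l * phiF l x).re

/-- `h_ε(θ, y)`. -/
def hEps {d : ℕ} (ε : ℝ) (c : (Fin d → ℝ) → (Fin d → ℝ) → ℝ)
    (θ : SymmL1 d) (y : Fin d → ℝ) : ℝ :=
  ε * Real.log (∫ x, Real.exp ((uFun θ x - c x y) / ε) ∂muU d) + ε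

/-- `H_ε(θ) = ∫ h_ε(θ, y) dν(y)`. -/
def HEps {d : ℕ} (ε : ℝ) (c : (Fin d → ℝ) → (Fin d → ℝ) → ℝ)
    (ν : Measure (Fin d → ℝ)) (θ : SymmL1 d) : ℝ :=
  ∫ y, hEps ε c θ y ∂ν

/-- The probability density `F_{θ,y}`. -/
def Fdens {d : ℕ} (ε : ℝ) (c : (Fin d → ℝ) → (Fin d → ℝ) → ℝ)
    (θ : SymmL1 d) (y : Fin d → ℝ) (x : Fin d → ℝ) : ℝ :=
  Real.exp ((uFun θ x - c x y) / ε) /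
    ∫ x', Real.exp ((uFun θ x' - c x' y) / ε) ∂muU d

/-- `g_λ(θ,y) = ∫ conj(φ_λ) F_{θ,y} dμ`, the `λ`-th partial derivative of `h_ε(·,y)`. -/
def gradC {d : ℕ} (ε : ℝ) (c : (Fin d → ℝ) → (Fin d → ℝ) → ℝ)
    (θ : SymmL1 d) (y : Fin d → ℝ) (l : Lam d) : ℂ :=
  ∫ x, starRingEnd ℂ (phiF l x) * (Fdens ε c θ y x : ℂ) ∂muU d

section Aux

variable {d : ℕ}

lemma norm_phiF (l : Lam d) (x : Fin d → ℝ) : ‖phiF l x‖ = 1 := by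
  have h : (∑ i, (l.1 i : ℂ) * (x i : ℂ)) = ((∑ i, (l.1 i : ℝ) * x i : ℝ) : ℂ) := by
    push_cast; ring
  rw [phiF, h, Complex.norm_exp]
  have : (2 * (Real.pi : ℂ) * Complex.I * ((∑ i, (l.1 i : ℝ) * x i : ℝ) : ℂ)).re = 0 := by
    simp [Complex.mul_re, Complex.mul_im]
  rw [this, Real.exp_zero]

lemma abs_phiF (l : Lam d) (x : Fin d → ℝ) : ‖phiF l x‖ = 1 :=
  norm_phiF l x

lemma summable_norm_coeff (θ : SymmL1 d) : Summable fun l => ‖coeffL θ l‖ := by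
  have h := (lp.memℓp (θ : lp (fun _ : Lam d => ℂ) 1)).summable (p := 1) (by norm_num)
  simpa [coeffL] using h

lemma norm_symmL1 (θ : SymmL1 d) : ‖θ‖ = ∑' l, ‖coeffL θ l‖ := by
  have : ‖θ‖ = ‖(θ : lp (fun _ : Lam d => ℂ) 1)‖ := rfl
  rw [this, lp.norm_eq_tsum_rpow (p := 1) (by norm_num)]
  simp [coeffL]

lemma summable_term (θ : SymmL1 d) (x : Fin d → ℝ) :
    Summable fun l => coeffL θ l * phiF l x := by
  refine Summable.of_norm ?_
  simpa [abs_phiF, norm_phiF] using summable_norm_coeff θ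

lemma abs_uFun_le (θ : SymmL1 d) (x : Fin d → ℝ) : |uFun θ x| ≤ ‖θ‖ := by
  rw [norm_symmL1]
  calc |uFun θ x| ≤ ‖∑' l, coeffL θ l * phiF l x‖ := Complex.abs_re_le_norm _
    _ ≤ ∑' l, ‖coeffL θ l * phiF l x‖ :=
      norm_tsum_le_tsum_norm (by simpa [abs_phiF, norm_phiF] using summable_norm_coeff θ)
    _ = ∑' l, ‖coeffL θ l‖ := by simp [abs_phiF, norm_phiF]

lemma coeffL_sub (θ η : SymmL1 d) (l : Lam d) :
    coeffL (θ - η) l = coeffL θ l - coeffL η l := by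
  simp [coeffL, lp.coeFn_sub]

lemma uFun_sub (θ η : SymmL1 d) (x : Fin d → ℝ) :
    uFun (θ - η) x = uFun θ x - uFun η x := by
  unfold uFun
  rw [← Complex.sub_re, ← Summable.tsum_sub (summable_term θ x) (summable_term η x)]
  congr 1
  apply tsum_congr
  intro l
  rw [coeffL_sub]; ring

lemma continuous_uFun (θ : SymmL1 d) : Continuous (uFun θ) := by
  refine Complex.continuous_re.comp ?_
  refine continuous_tsum (fun l => ?_) (summable_norm_coeff θ) (fun l x => ?_)
  · exact continuous_const.mul (Complex.continuous_exp.comp (by fun_prop))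
  · simp [abs_phiF, norm_phiF]

instance instProbMuU : IsProbabilityMeasure (muU d) := by
  constructor
  rw [muU, Measure.restrict_apply_univ, cube, Real.volume_Icc_pi]
  simp

end Aux
section Hoeff

lemma exp_le_chord {a x : ℝ} (ha : 0 < a) (h : |x| ≤ a) :
    Real.exp x ≤ Real.cosh a + (x / a) * Real.sinh a := by
  obtain ⟨h1, h2⟩ := abs_le.mp h
  have hα : (0:ℝ) ≤ (a - x) / (2 * a) := div_nonneg (by linarith) (by linarith)
  have hβ : (0:ℝ) ≤ (a + x) / (2 * a) := div_nonneg (by linarith) (by linarith)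
  have hαβ : (a - x) / (2 * a) + (a + x) / (2 * a) = 1 := by field_simp; ring
  have key := convexOn_exp.2 (Set.mem_univ (-a)) (Set.mem_univ a) hα hβ hαβ
  have hx : ((a - x) / (2 * a)) • (-a) + ((a + x) / (2 * a)) • a = x := by
    rw [smul_eq_mul, smul_eq_mul]; field_simp; ring
  rw [hx] at key
  rw [Real.cosh_eq, Real.sinh_eq]
  calc Real.exp x ≤ ((a - x) / (2 * a)) • Real.exp (-a) + ((a + x) / (2 * a)) • Real.exp a := key
    _ = (Real.exp a + Real.exp (-a)) / 2 + x / a * ((Real.exp a - Real.exp (-a)) / 2) := by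
        rw [smul_eq_mul, smul_eq_mul]; field_simp; ring

lemma mgf_prod_le {Ω : Type*} [MeasurableSpace Ω] (P : MeasureTheory.Measure Ω)
    [MeasureTheory.IsProbabilityMeasure P] {X : Ω → ℝ} {a : ℝ} (ha : 0 < a)
    (hXm : MeasureTheory.AEStronglyMeasurable X P) (hX : ∀ ω, |X ω| ≤ a) :
    (∫ ω, Real.exp (X ω) ∂P) * (∫ ω, Real.exp (-X ω) ∂P) ≤ Real.exp (a ^ 2) := by
  have hXint : MeasureTheory.Integrable X P :=
    MeasureTheory.Integrable.mono' (MeasureTheory.integrable_const a) hXm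
      (Filter.Eventually.of_forall fun ω => by simpa using hX ω)
  have hexp : ∀ (s : ℝ), |s| = 1 → MeasureTheory.Integrable (fun ω => Real.exp (s * X ω)) P := by
    intro s hs
    refine MeasureTheory.Integrable.mono' (MeasureTheory.integrable_const (Real.exp a))
      (Real.continuous_exp.comp_aestronglyMeasurable (hXm.const_mul s))
      (Filter.Eventually.of_forall fun ω => ?_)
    rw [Real.norm_eq_abs, Real.abs_exp]
    apply Real.exp_le_exp.mpr
    calc s * X ω ≤ |s * X ω| := le_abs_self _
      _ = |X ω| := by rw [abs_mul, hs, one_mul]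
      _ ≤ a := hX ω
  set m : ℝ := ∫ ω, X ω ∂P with hm
  have hchord : ∀ (s : ℝ), |s| = 1 →
      (∫ ω, Real.exp (s * X ω) ∂P) ≤ Real.cosh a + (s * m / a) * Real.sinh a := by
    intro s hs
    have hmono : (∫ ω, Real.exp (s * X ω) ∂P)
        ≤ ∫ ω, Real.cosh a + (s * X ω / a) * Real.sinh a ∂P := by
      refine MeasureTheory.integral_mono (hexp s hs) ?_ (fun ω => ?_)
      · exact (MeasureTheory.integrable_const _).add
          (((hXint.const_mul s).div_const a).mul_const _)
      · refine exp_le_chord ha ?_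
        rw [abs_mul, hs, one_mul]; exact hX ω
    have heq : ∫ ω, Real.cosh a + (s * X ω / a) * Real.sinh a ∂P
        = Real.cosh a + (s * m / a) * Real.sinh a := by
      rw [MeasureTheory.integral_add (MeasureTheory.integrable_const _)
        (((hXint.const_mul s).div_const a).mul_const _),
        MeasureTheory.integral_const]
      simp only [MeasureTheory.probReal_univ, ENNReal.toReal_one, smul_eq_mul, one_mul]
      rw [MeasureTheory.integral_mul_const, MeasureTheory.integral_div,
        MeasureTheory.integral_const_mul]
    linarith [hmono, heq.le, heq.ge]
  have h1 := hchord 1 (by norm_num)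
  have h2 := hchord (-1) (by norm_num)
  simp only [one_mul, neg_one_mul] at h1 h2
  have hnn1 : (0:ℝ) ≤ ∫ ω, Real.exp (X ω) ∂P :=
    MeasureTheory.integral_nonneg fun ω => (Real.exp_pos _).le
  have hnn2 : (0:ℝ) ≤ ∫ ω, Real.exp (-X ω) ∂P :=
    MeasureTheory.integral_nonneg fun ω => (Real.exp_pos _).le
  have hprod : (∫ ω, Real.exp (X ω) ∂P) * (∫ ω, Real.exp (-X ω) ∂P)
      ≤ (Real.cosh a + m / a * Real.sinh a) * (Real.cosh a + -m / a * Real.sinh a) :=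
    mul_le_mul h1 h2 hnn2 (le_trans hnn1 h1)
  have hcosh := Real.cosh_le_exp_half_sq a
  have hco : 0 < Real.cosh a := Real.cosh_pos (x := a)
  have hsq : Real.exp (a ^ 2 / 2) * Real.exp (a ^ 2 / 2) = Real.exp (a ^ 2) := by
    rw [← Real.exp_add]; ring_nf
  have e1 : (Real.cosh a + m / a * Real.sinh a) * (Real.cosh a + -m / a * Real.sinh a)
      = Real.cosh a ^ 2 - (m / a * Real.sinh a) ^ 2 := by ring
  calc (∫ ω, Real.exp (X ω) ∂P) * (∫ ω, Real.exp (-X ω) ∂P)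
      ≤ Real.cosh a ^ 2 - (m / a * Real.sinh a) ^ 2 := by rw [← e1]; exact hprod
    _ ≤ Real.cosh a ^ 2 := by nlinarith [sq_nonneg (m / a * Real.sinh a)]
    _ ≤ Real.exp (a ^ 2 / 2) ^ 2 := pow_le_pow_left₀ hco.le hcosh 2
    _ = Real.exp (a ^ 2) := by rw [sq, hsq]

end Hoeff
section Key

lemma log_diff_abs_le {A Z C : ℝ} (hA : 0 < A) (hZ : 0 < Z) (hC : 0 ≤ C)
    (h1 : A ≤ Real.exp C * Z) (h2 : Z ≤ Real.exp C * A) :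
    |Real.log A - Real.log Z| ≤ C := by
  rw [abs_le]
  constructor
  · have := Real.log_le_log hZ h2
    rw [Real.log_mul (Real.exp_ne_zero C) hA.ne', Real.log_exp] at this
    linarith
  · have := Real.log_le_log hA h1
    rw [Real.log_mul (Real.exp_ne_zero C) hZ.ne', Real.log_exp] at this
    linarith

lemma key_ineq {X : Type*} [MeasurableSpace X] (μ : MeasureTheory.Measure X)
    [MeasureTheory.IsProbabilityMeasure μ]
    {ε M : ℝ} (hε : 0 < ε) (hM : 0 < M) (g w : X → ℝ) (hw_meas : Measurable w)
    (hw : ∀ x, |w x| ≤ M) :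
    (ε * Real.log (∫ x, Real.exp (g x + w x / ε) ∂μ)
      + ε * Real.log (∫ x, Real.exp (g x - w x / ε) ∂μ)
      - 2 * (ε * Real.log (∫ x, Real.exp (g x) ∂μ)) ≤ M ^ 2 / ε)
    ∧ |ε * Real.log (∫ x, Real.exp (g x + w x / ε) ∂μ)
        - ε * Real.log (∫ x, Real.exp (g x) ∂μ)| ≤ M
    ∧ |ε * Real.log (∫ x, Real.exp (g x - w x / ε) ∂μ)
        - ε * Real.log (∫ x, Real.exp (g x) ∂μ)| ≤ M := by
  classical
  have hMε : (0:ℝ) < M / ε := div_pos hM hε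
  have hwd : ∀ (s : ℝ), |s| ≤ 1 → ∀ x, |s * w x / ε| ≤ M / ε := by
    intro s hs x
    rw [abs_div, abs_of_pos hε, abs_mul]
    refine (div_le_div_iff_of_pos_right hε).mpr ?_
    calc |s| * |w x| ≤ 1 * M := mul_le_mul hs (hw x) (abs_nonneg _) zero_le_one
      _ = M := one_mul M
  by_cases hI : MeasureTheory.Integrable (fun x => Real.exp (g x)) μ
  · -- integrable case
    have hexp_meas : ∀ (s : ℝ), MeasureTheory.AEStronglyMeasurable
        (fun x => Real.exp (s * w x / ε)) μ :=
      fun s => (Real.measurable_exp.comp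
        ((hw_meas.const_mul s).div_const ε)).aestronglyMeasurable
    have hInt : ∀ (s : ℝ), |s| ≤ 1 →
        MeasureTheory.Integrable (fun x => Real.exp (g x + s * w x / ε)) μ := by
      intro s hs
      have := hI.bdd_mul (hexp_meas s) (c := Real.exp (M / ε)) (Filter.Eventually.of_forall fun x => by
        rw [Real.norm_eq_abs, Real.abs_exp]
        exact Real.exp_le_exp.mpr (le_trans (le_abs_self _) (hwd s hs x)))
      refine this.congr (Filter.Eventually.of_forall fun x => ?_)
      show Real.exp (s * w x / ε) * Real.exp (g x) = Real.exp (g x + s * w x / ε)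
      rw [← Real.exp_add]; ring_nf
    have hI1 : MeasureTheory.Integrable (fun x => Real.exp (g x + w x / ε)) μ := by
      have := hInt 1 (by norm_num); simpa using this
    have hI2 : MeasureTheory.Integrable (fun x => Real.exp (g x - w x / ε)) μ := by
      have := hInt (-1) (by norm_num)
      refine this.congr (Filter.Eventually.of_forall fun x => ?_)
      show Real.exp (g x + -1 * w x / ε) = Real.exp (g x - w x / ε)
      ring_nf
    set Z0 := ∫ x, Real.exp (g x) ∂μ with hZ0def
    set A1 := ∫ x, Real.exp (g x + w x / ε) ∂μ with hA1def
    set A2 := ∫ x, Real.exp (g x - w x / ε) ∂μ with hA2def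
    have hZ0 : 0 < Z0 := MeasureTheory.integral_exp_pos hI
    have hA1 : 0 < A1 := MeasureTheory.integral_exp_pos hI1
    have hA2 : 0 < A2 := MeasureTheory.integral_exp_pos hI2
    -- Lipschitz bounds
    have hup : ∀ {u v : X → ℝ}, MeasureTheory.Integrable u μ → MeasureTheory.Integrable v μ →
        (∀ x, u x ≤ Real.exp (M / ε) * v x) →
        (∫ x, u x ∂μ) ≤ Real.exp (M / ε) * ∫ x, v x ∂μ := by
      intro u v hu hv h
      calc (∫ x, u x ∂μ) ≤ ∫ x, Real.exp (M / ε) * v x ∂μ :=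
            MeasureTheory.integral_mono hu (hv.const_mul _) h
        _ = Real.exp (M / ε) * ∫ x, v x ∂μ := MeasureTheory.integral_const_mul _ _
    have hb1 : ∀ x, Real.exp (g x + w x / ε) ≤ Real.exp (M / ε) * Real.exp (g x) := by
      intro x
      rw [← Real.exp_add]
      apply Real.exp_le_exp.mpr
      have := le_trans (le_abs_self _) ((hwd 1 (by norm_num) x)); rw [one_mul] at this
      linarith
    have hb1' : ∀ x, Real.exp (g x) ≤ Real.exp (M / ε) * Real.exp (g x + w x / ε) := by
      intro x
      rw [← Real.exp_add]
      apply Real.exp_le_exp.mpr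
      have h2 := (abs_le.mp (hwd 1 (by norm_num) x)).1
      rw [one_mul] at h2
      linarith
    have hb2 : ∀ x, Real.exp (g x - w x / ε) ≤ Real.exp (M / ε) * Real.exp (g x) := by
      intro x
      rw [← Real.exp_add]
      apply Real.exp_le_exp.mpr
      have h2 := (abs_le.mp (hwd 1 (by norm_num) x)).1
      rw [one_mul] at h2
      linarith
    have hb2' : ∀ x, Real.exp (g x) ≤ Real.exp (M / ε) * Real.exp (g x - w x / ε) := by
      intro x
      rw [← Real.exp_add]
      apply Real.exp_le_exp.mpr
      have h2 := (abs_le.mp (hwd 1 (by norm_num) x)).2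
      rw [one_mul] at h2
      linarith
    have hlip1 : |ε * Real.log A1 - ε * Real.log Z0| ≤ M := by
      rw [← mul_sub, abs_mul, abs_of_pos hε]
      have := log_diff_abs_le hA1 hZ0 hMε.le (hup hI1 hI hb1) (hup hI hI1 hb1')
      calc ε * |Real.log A1 - Real.log Z0| ≤ ε * (M / ε) := by
            exact mul_le_mul_of_nonneg_left this hε.le
        _ = M := by field_simp
    have hlip2 : |ε * Real.log A2 - ε * Real.log Z0| ≤ M := by
      rw [← mul_sub, abs_mul, abs_of_pos hε]
      have := log_diff_abs_le hA2 hZ0 hMε.le (hup hI2 hI hb2) (hup hI hI2 hb2')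
      calc ε * |Real.log A2 - Real.log Z0| ≤ ε * (M / ε) := by
            exact mul_le_mul_of_nonneg_left this hε.le
        _ = M := by field_simp
    -- Hoeffding part through the tilted measure
    have hgae : AEMeasurable (fun x => Real.exp (g x) / Z0) μ :=
      (hI.aestronglyMeasurable.aemeasurable).div_const Z0
    have hfa : AEMeasurable (fun x => (Real.exp (g x) / Z0).toNNReal) μ :=
      measurable_real_toNNReal.comp_aemeasurable hgae
    set P : MeasureTheory.Measure X :=
      μ.withDensity (fun x => ((Real.exp (g x) / Z0).toNNReal : ENNReal)) with hPdef
    have hPint : ∀ (φ : X → ℝ), (∫ x, φ x ∂P) = ∫ x, (Real.exp (g x) / Z0) * φ x ∂μ := by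
      intro φ
      rw [hPdef, integral_withDensity_eq_integral_smul₀ hfa φ]
      congr 1
      funext x
      rw [NNReal.smul_def, Real.coe_toNNReal _ (by positivity), smul_eq_mul]
    have hPuniv : IsProbabilityMeasure P := by
      constructor
      rw [hPdef, MeasureTheory.withDensity_apply _ MeasurableSet.univ,
        MeasureTheory.Measure.restrict_univ]
      have : ∀ x, ((Real.exp (g x) / Z0).toNNReal : ENNReal) = ENNReal.ofReal (Real.exp (g x) / Z0) := by
        intro x; rfl
      simp_rw [this]
      rw [← MeasureTheory.ofReal_integral_eq_lintegral_ofReal (hI.div_const Z0)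
        (Filter.Eventually.of_forall fun x => by positivity)]
      rw [MeasureTheory.integral_div, div_self hZ0.ne']
      exact ENNReal.ofReal_one
    have hmgf := mgf_prod_le P (X := fun x => w x / ε) hMε
      ((hw_meas.div_const ε).aestronglyMeasurable)
      (fun x => by have := hwd 1 (by norm_num) x; rwa [one_mul] at this)
    have hint1 : (∫ x, Real.exp (w x / ε) ∂P) = A1 / Z0 := by
      rw [hPint, hA1def, ← MeasureTheory.integral_div]
      congr 1; funext x
      rw [Real.exp_add]
      field_simp
    have hint2 : (∫ x, Real.exp (-(w x / ε)) ∂P) = A2 / Z0 := by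
      rw [hPint, hA2def, ← MeasureTheory.integral_div]
      congr 1; funext x
      rw [sub_eq_add_neg, Real.exp_add]
      field_simp
    rw [hint1, hint2] at hmgf
    have hmul : A1 * A2 ≤ Real.exp ((M / ε) ^ 2) * Z0 ^ 2 := by
      rw [div_mul_div_comm] at hmgf
      rw [div_le_iff₀ (by positivity)] at hmgf
      calc A1 * A2 ≤ Real.exp ((M / ε) ^ 2) * (Z0 * Z0) := hmgf
        _ = Real.exp ((M / ε) ^ 2) * Z0 ^ 2 := by ring
    have hlog := Real.log_le_log (by positivity) hmul
    rw [Real.log_mul hA1.ne' hA2.ne',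
      Real.log_mul (Real.exp_ne_zero _) (by positivity : Z0 ^ 2 ≠ 0),
      Real.log_exp, Real.log_pow] at hlog
    refine ⟨?_, hlip1, hlip2⟩
    have hfin : ε * ((M / ε) ^ 2) = M ^ 2 / ε := by field_simp
    push_cast at hlog
    nlinarith [hlog, hε]
  · -- non-integrable case: all integrals are zero
    have hnon : ∀ (s : ℝ), |s| ≤ 1 →
        ¬ MeasureTheory.Integrable (fun x => Real.exp (g x + s * w x / ε)) μ := by
      intro s hs hcon
      apply hI
      have hbm := hcon.bdd_mul
        ((Real.measurable_exp.comp
          ((hw_meas.const_mul (-s)).div_const ε)).aestronglyMeasurable)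
        (c := Real.exp (M / ε)) (Filter.Eventually.of_forall fun x => by
          simp only [Function.comp_apply]
          rw [Real.norm_eq_abs, Real.abs_exp]
          refine Real.exp_le_exp.mpr (le_trans (le_abs_self _) ?_)
          have := hwd (-s) (by rwa [abs_neg]) x
          exact this)
      refine hbm.congr (Filter.Eventually.of_forall fun x => ?_)
      show Real.exp (-s * w x / ε) * Real.exp (g x + s * w x / ε) = Real.exp (g x)
      rw [← Real.exp_add]; ring_nf
    have h1 : ¬ MeasureTheory.Integrable (fun x => Real.exp (g x + w x / ε)) μ := by
      have := hnon 1 (by norm_num); simpa using this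
    have h2 : ¬ MeasureTheory.Integrable (fun x => Real.exp (g x - w x / ε)) μ := by
      intro hcon
      refine hnon (-1) (by norm_num) (hcon.congr (Filter.Eventually.of_forall fun x => ?_))
      show Real.exp (g x - w x / ε) = Real.exp (g x + -1 * w x / ε)
      ring_nf
    rw [MeasureTheory.integral_undef hI, MeasureTheory.integral_undef h1,
      MeasureTheory.integral_undef h2, Real.log_zero]
    refine ⟨by simpa using (by positivity : (0:ℝ) ≤ M ^ 2 / ε), by simpa using hM.le,
      by simpa using hM.le⟩

end Key
section Wrap

variable {d : ℕ}

lemma hEps_key (ε : ℝ) (hε : 0 < ε) (c : (Fin d → ℝ) → (Fin d → ℝ) → ℝ)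
    (θε θ : SymmL1 d) (hM : 0 < ‖θ - θε‖) (y : Fin d → ℝ) :
    (hEps ε c θ y + hEps ε c (θε - (θ - θε)) y - 2 * hEps ε c θε y ≤ ‖θ - θε‖ ^ 2 / ε)
    ∧ |hEps ε c θ y - hEps ε c θε y| ≤ ‖θ - θε‖
    ∧ |hEps ε c (θε - (θ - θε)) y - hEps ε c θε y| ≤ ‖θ - θε‖ := by
  set M := ‖θ - θε‖ with hMdef
  set g : (Fin d → ℝ) → ℝ := fun x => (uFun θε x - c x y) / ε with hgdef
  set w : (Fin d → ℝ) → ℝ := fun x => uFun (θ - θε) x with hwdef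
  have hkey := key_ineq (muU d) hε hM g w (continuous_uFun _).measurable
    (fun x => abs_uFun_le _ x)
  have e1 : ∀ x, (uFun θ x - c x y) / ε = g x + w x / ε := by
    intro x
    rw [hgdef, hwdef]
    simp only [uFun_sub]
    ring
  have e2 : ∀ x, (uFun (θε - (θ - θε)) x - c x y) / ε = g x - w x / ε := by
    intro x
    rw [hgdef, hwdef]
    simp only [uFun_sub]
    ring
  have h1 : hEps ε c θ y = ε * Real.log (∫ x, Real.exp (g x + w x / ε) ∂muU d) + ε := by
    rw [hEps]; simp only [e1]
  have h2 : hEps ε c (θε - (θ - θε)) y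
      = ε * Real.log (∫ x, Real.exp (g x - w x / ε) ∂muU d) + ε := by
    rw [hEps]; simp only [e2]
  have h0 : hEps ε c θε y = ε * Real.log (∫ x, Real.exp (g x) ∂muU d) + ε := by rfl
  rw [h1, h2, h0]
  obtain ⟨k1, k2, k3⟩ := hkey
  refine ⟨by linarith, by simpa using k2, by simpa using k3⟩

lemma aesm_hEps (ε : ℝ) (c : (Fin d → ℝ) → (Fin d → ℝ) → ℝ)
    (ν : MeasureTheory.Measure (Fin d → ℝ)) [MeasureTheory.IsProbabilityMeasure ν]
    (hc : MeasureTheory.AEStronglyMeasurable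
      (fun p : (Fin d → ℝ) × (Fin d → ℝ) => c p.1 p.2) ((muU d).prod ν))
    (θ : SymmL1 d) :
    MeasureTheory.AEStronglyMeasurable (fun y => hEps ε c θ y) ν := by
  have hsw : MeasureTheory.AEStronglyMeasurable
      (fun z : (Fin d → ℝ) × (Fin d → ℝ) => c z.2 z.1) (ν.prod (muU d)) := hc.prod_swap
  have h1 : MeasureTheory.AEStronglyMeasurable
      (fun z : (Fin d → ℝ) × (Fin d → ℝ) => Real.exp ((uFun θ z.2 - c z.2 z.1) / ε))
      (ν.prod (muU d)) :=
    (Real.measurable_exp.comp_aemeasurable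
      (((((continuous_uFun θ).comp continuous_snd).aemeasurable).sub
        hsw.aemeasurable).div_const ε)).aestronglyMeasurable
  have h2 : MeasureTheory.AEStronglyMeasurable
      (fun y => ∫ x, Real.exp ((uFun θ x - c x y) / ε) ∂muU d) ν :=
    h1.integral_prod_right'
  have h3 : AEMeasurable (fun y => Real.log
      (∫ x, Real.exp ((uFun θ x - c x y) / ε) ∂muU d)) ν :=
    Real.measurable_log.comp_aemeasurable h2.aemeasurable
  exact ((h3.const_mul ε).add_const ε).aestronglyMeasurable

end Wrap
/-- quadratic upper bound at the minimizer.
If `θ^ε` minimizes `H_ε` over `ℓ̄₁(Λ)`, then for all `θ`,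
`H_ε(θ) − H_ε(θ^ε) ≤ (1/ε) ‖θ − θ^ε‖²_{ℓ1}`. -/
theorem statement5
    (d : ℕ) (hd : 0 < d) (ε : ℝ) (hε : 0 < ε)
    (Y : Set (Fin d → ℝ)) (ν : Measure (Fin d → ℝ)) [IsProbabilityMeasure ν]
    (hνY : ν Yᶜ = 0)
    (c : (Fin d → ℝ) → (Fin d → ℝ) → ℝ)
    (hc_lsc : LowerSemicontinuousOn (fun p : (Fin d → ℝ) × (Fin d → ℝ) => c p.1 p.2)
      (cube d ×ˢ Y))
    (hc_int : Integrable (fun p : (Fin d → ℝ) × (Fin d → ℝ) => c p.1 p.2) ((muU d).prod ν))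
    (θε : SymmL1 d) (hmin : ∀ θ : SymmL1 d, HEps ε c ν θε ≤ HEps ε c ν θ) :
    ∀ θ : SymmL1 d, HEps ε c ν θ - HEps ε c ν θε ≤ (1 / ε) * ‖θ - θε‖ ^ 2 := by
  intro θ
  by_cases hθ : θ = θε
  · subst hθ
    simp [mul_nonneg (by positivity : (0:ℝ) ≤ 1 / ε) (by positivity : (0:ℝ) ≤ ‖θ - θ‖ ^ 2)]
  have hM : 0 < ‖θ - θε‖ := by
    rw [norm_pos_iff]
    exact sub_ne_zero.mpr hθ
  set M := ‖θ - θε‖ with hMdef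
  set θ' : SymmL1 d := θε - (θ - θε) with hθ'def
  have hkey := fun y => hEps_key ε hε c θε θ hM y
  have haesm := fun (η : SymmL1 d) => aesm_hEps ε c ν hc_int.aestronglyMeasurable η
  have hgoal : (1 / ε) * M ^ 2 = M ^ 2 / ε := by ring
  by_cases hI : Integrable (fun y => hEps ε c θε y) ν
  · -- integrable case
    have hdiff1 : Integrable (fun y => hEps ε c θ y - hEps ε c θε y) ν :=
      Integrable.mono' (integrable_const M) ((haesm θ).sub (haesm θε))
        (Filter.Eventually.of_forall fun y => by
          rw [Real.norm_eq_abs]; exact (hkey y).2.1)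
    have hdiff2 : Integrable (fun y => hEps ε c θ' y - hEps ε c θε y) ν :=
      Integrable.mono' (integrable_const M) ((haesm θ').sub (haesm θε))
        (Filter.Eventually.of_forall fun y => by
          rw [Real.norm_eq_abs]; exact (hkey y).2.2)
    have hI1 : Integrable (fun y => hEps ε c θ y) ν := by
      have := hdiff1.add hI
      refine this.congr (Filter.Eventually.of_forall fun y => by simp)
    have hI2 : Integrable (fun y => hEps ε c θ' y) ν := by
      have := hdiff2.add hI
      refine this.congr (Filter.Eventually.of_forall fun y => by simp)
    have hIc : Integrable (fun y => hEps ε c θ y + hEps ε c θ' y - 2 * hEps ε c θε y) ν :=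
      (hI1.add hI2).sub (hI.const_mul 2)
    have hsum : (∫ y, (hEps ε c θ y + hEps ε c θ' y - 2 * hEps ε c θε y) ∂ν) ≤ M ^ 2 / ε := by
      calc (∫ y, (hEps ε c θ y + hEps ε c θ' y - 2 * hEps ε c θε y) ∂ν)
          ≤ ∫ _, M ^ 2 / ε ∂ν := integral_mono hIc (integrable_const _) fun y => (hkey y).1
        _ = M ^ 2 / ε := by simp
    have hIa : Integrable (fun y => hEps ε c θ y + hEps ε c θ' y) ν := hI1.add hI2
    have hIb : Integrable (fun y => 2 * hEps ε c θε y) ν := hI.const_mul 2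
    rw [integral_sub hIa hIb, integral_add hI1 hI2, integral_const_mul] at hsum
    have hmin' : (∫ y, hEps ε c θε y ∂ν) ≤ ∫ y, hEps ε c θ' y ∂ν := hmin θ'
    rw [hgoal]
    show (∫ y, hEps ε c θ y ∂ν) - (∫ y, hEps ε c θε y ∂ν) ≤ M ^ 2 / ε
    linarith
  · -- non-integrable case
    have hI1 : ¬ Integrable (fun y => hEps ε c θ y) ν := by
      intro hcon
      apply hI
      have hdiff1 : Integrable (fun y => hEps ε c θ y - hEps ε c θε y) ν :=
        Integrable.mono' (integrable_const M) ((haesm θ).sub (haesm θε))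
          (Filter.Eventually.of_forall fun y => by
            rw [Real.norm_eq_abs]; exact (hkey y).2.1)
      have := hcon.sub hdiff1
      refine this.congr (Filter.Eventually.of_forall fun y => by simp)
    have e1 : HEps ε c ν θ = ∫ y, hEps ε c θ y ∂ν := rfl
    have e3 : HEps ε c ν θε = ∫ y, hEps ε c θε y ∂ν := rfl
    rw [e1, e3, integral_undef hI1, integral_undef hI]
    rw [hgoal]
    simpa using (by positivity : (0:ℝ) ≤ M ^ 2 / ε)

end
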